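/- arXiv:2308.02484 — 3 statements merged into one kernel-verified Lean document; each statement's English description precedes it below -/
import Mathlib

section
/- Consider the gradient adaptive laws θ(t+1) = θ(t) − sign(ρ*) Γ s_ζ(t)/m²(t) and ρ(t+1) = ρ(t) − γ s_ξ(t)/m²(t), where s_ζ(t) = ∑ᵢ εᵢ(t) ζᵢ(t), s_ξ(t) = ∑ᵢ εᵢ(t) ξᵢ(t), and the estimation errors satisfy εᵢ(t) = ρ* (θ(t) − θ*)ᵀ ζᵢ(t) + (ρ(t) − ρ*) ξᵢ(t). Let V(t) = |ρ*| (θ(t) − θ*)ᵀ Γ⁻¹ (θ(t) − θ*) + γ⁻¹ (ρ(t) − ρ*)². If γ₁ ∈ (0,2) is the largest eigenvalue of |ρ*| Γ, γ ∈ (0,2), and m(t)² = 1 + ∑ᵢ ζᵢ(t)ᵀ ζᵢ(t) + ∑ᵢ ξᵢ(t)², then V(t+1) − V(t) ≤ −(2 − γ₀) ∑ᵢ εᵢ(t)² / m²(t) ≤ 0, where γ₀ = max{γ₁, γ}. -/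
open scoped Matrix

set_option maxHeartbeats 1000000 in
theorem direct_adaptive_law_V_decrease
    (n : ℕ) (ρs : ℝ) (hρs : ρs ≠ 0)
    (θ : ℕ → Fin (n + 1) → ℝ) (θs : Fin (n + 1) → ℝ) (ρ : ℕ → ℝ)
    (Γ : Matrix (Fin (n + 1)) (Fin (n + 1)) ℝ)
    (hΓsym : Γ.IsSymm) (hΓpd : Γ.PosDef)
    (γ γ1 : ℝ) (hγ : γ ∈ Set.Ioo (0 : ℝ) 2) (hγ1 : γ1 ∈ Set.Ioo (0 : ℝ) 2)
    (hγ1max : ∀ v : Fin (n + 1) → ℝ, v ⬝ᵥ (|ρs| • Γ).mulVec v ≤ γ1 * (v ⬝ᵥ v))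
    (ζ : ℕ → Fin n → Fin (n + 1) → ℝ) (ξ ε : ℕ → Fin n → ℝ) (m : ℕ → ℝ)
    (hm : ∀ t, m t = Real.sqrt (1 + ∑ i, ζ t i ⬝ᵥ ζ t i + ∑ i, (ξ t i) ^ 2))
    (hε : ∀ t i, ε t i = ρs * ((θ t - θs) ⬝ᵥ ζ t i) + (ρ t - ρs) * ξ t i)
    (hθ : ∀ t, θ (t + 1) =
      θ t - (Real.sign ρs / m t ^ 2) • Γ.mulVec (∑ i, ε t i • ζ t i))
    (hρ : ∀ t, ρ (t + 1) = ρ t - γ * (∑ i, ε t i * ξ t i) / m t ^ 2)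
    (V : ℕ → ℝ)
    (hV : ∀ t, V t =
      |ρs| * ((θ t - θs) ⬝ᵥ Γ⁻¹.mulVec (θ t - θs)) + γ⁻¹ * (ρ t - ρs) ^ 2)
    (γ0 : ℝ) (hγ0 : γ0 = max γ1 γ) :
    ∀ t, V (t + 1) - V t ≤ -(2 - γ0) * (∑ i, (ε t i) ^ 2) / m t ^ 2 ∧
      -(2 - γ0) * (∑ i, (ε t i) ^ 2) / m t ^ 2 ≤ 0 := by
  obtain ⟨hγpos, hγlt⟩ := hγ
  obtain ⟨hγ1pos, hγ1lt⟩ := hγ1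
  have hγ0nn : 0 ≤ γ0 := by rw [hγ0]; exact le_trans hγ1pos.le (le_max_left _ _)
  have hγ0lt : γ0 < 2 := by rw [hγ0]; exact max_lt hγ1lt hγlt
  have hγ1le : γ1 ≤ γ0 := by rw [hγ0]; exact le_max_left _ _
  have hγle : γ ≤ γ0 := by rw [hγ0]; exact le_max_right _ _
  -- matrix facts
  have hdet : IsUnit Γ.det := isUnit_iff_ne_zero.mpr hΓpd.det_pos.ne'
  have hinv : Γ⁻¹ * Γ = 1 := Matrix.nonsing_inv_mul Γ hdet
  have hmulinv : ∀ v : Fin (n + 1) → ℝ, Γ⁻¹ *ᵥ (Γ *ᵥ v) = v := fun v => by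
    rw [Matrix.mulVec_mulVec, hinv, Matrix.one_mulVec]
  have hsymm : Γᵀ = Γ := hΓsym
  have hsymminv : (Γ⁻¹)ᵀ = Γ⁻¹ := by rw [Matrix.transpose_nonsing_inv, hsymm]
  have hds : ∀ (B : Matrix (Fin (n + 1)) (Fin (n + 1)) ℝ), Bᵀ = B →
      ∀ x y : Fin (n + 1) → ℝ, x ⬝ᵥ B *ᵥ y = y ⬝ᵥ B *ᵥ x := by
    intro B hB x y
    have h1 : x ᵥ* B = B *ᵥ x := by conv_lhs => rw [← hB, Matrix.vecMul_transpose]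
    rw [Matrix.dotProduct_mulVec, h1, dotProduct_comm]
  have habs : |ρs| * Real.sign ρs = ρs := by
    rcases hρs.lt_or_gt with h' | h'
    · rw [Real.sign_of_neg h', abs_of_neg h']; ring
    · rw [Real.sign_of_pos h', abs_of_pos h']; ring
  have hsg2 : Real.sign ρs ^ 2 = 1 := by
    rcases hρs.lt_or_gt with h' | h'
    · rw [Real.sign_of_neg h']; norm_num
    · rw [Real.sign_of_pos h']; norm_num
  intro t
  set s : Fin (n + 1) → ℝ := ∑ i, ε t i • ζ t i with hs
  set E : ℝ := ∑ i, (ε t i) ^ 2 with hE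
  set Sx : ℝ := ∑ i, ε t i * ξ t i with hSx
  set A : ℝ := ∑ i, ζ t i ⬝ᵥ ζ t i with hA
  set B : ℝ := ∑ i, (ξ t i) ^ 2 with hB
  have hA0 : 0 ≤ A := by
    rw [hA]
    refine Finset.sum_nonneg fun i _ => ?_
    simp only [dotProduct, ← sq]
    positivity
  have hB0 : 0 ≤ B := by rw [hB]; positivity
  have hE0 : 0 ≤ E := by rw [hE]; positivity
  have hMeq : m t ^ 2 = 1 + A + B := by
    rw [hm t, ← hA, ← hB, Real.sq_sqrt (by linarith)]
  have hMpos : 0 < m t ^ 2 := by rw [hMeq]; linarith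
  have hm0 : m t ^ 2 ≠ 0 := ne_of_gt hMpos
  -- expansion of the quadratic form at t+1
  have hθ1 : θ (t + 1) - θs = (θ t - θs) - (Real.sign ρs / m t ^ 2) • (Γ *ᵥ s) := by
    rw [hθ t, ← hs, sub_right_comm]
  have hP : (θ (t + 1) - θs) ⬝ᵥ Γ⁻¹ *ᵥ (θ (t + 1) - θs)
      = (θ t - θs) ⬝ᵥ Γ⁻¹ *ᵥ (θ t - θs)
        - 2 * (Real.sign ρs / m t ^ 2) * ((θ t - θs) ⬝ᵥ s)
        + (Real.sign ρs / m t ^ 2) ^ 2 * (s ⬝ᵥ Γ *ᵥ s) := by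
    rw [hθ1]
    generalize θ t - θs = a
    have e1 : Γ⁻¹ *ᵥ (Γ *ᵥ s) = s := hmulinv s
    have e2 : (Γ *ᵥ s) ⬝ᵥ (Γ⁻¹ *ᵥ a) = a ⬝ᵥ s := by
      rw [hds _ hsymminv, e1]
    have e3 : (Γ *ᵥ s) ⬝ᵥ s = s ⬝ᵥ (Γ *ᵥ s) := dotProduct_comm _ _
    simp only [sub_dotProduct, dotProduct_sub, Matrix.mulVec_sub,
      Matrix.mulVec_smul, smul_dotProduct, dotProduct_smul, smul_eq_mul,
      e1, e2, e3]
    ring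
  have hras : ρs * ((θ t - θs) ⬝ᵥ s) = E - (ρ t - ρs) * Sx := by
    have h1 : (θ t - θs) ⬝ᵥ s = ∑ i, ε t i * ((θ t - θs) ⬝ᵥ ζ t i) := by
      rw [hs]
      simp only [dotProduct, Finset.sum_apply, Pi.smul_apply, smul_eq_mul,
        Finset.mul_sum]
      rw [Finset.sum_comm]
      refine Finset.sum_congr rfl fun i _ => ?_
      exact Finset.sum_congr rfl fun j _ => by ring
    have h2 : ∀ i, ρs * (ε t i * ((θ t - θs) ⬝ᵥ ζ t i))
        = ε t i ^ 2 - (ρ t - ρs) * (ε t i * ξ t i) := fun i => by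
      linear_combination (-(ε t i)) * hε t i
    rw [h1, Finset.mul_sum]
    rw [Finset.sum_congr rfl fun i _ => h2 i]
    rw [Finset.sum_sub_distrib, ← Finset.mul_sum, hE, hSx]
  -- Cauchy-Schwarz bounds
  have hss0 : 0 ≤ s ⬝ᵥ s := by
    simp only [dotProduct, ← sq]; positivity
  have hss : s ⬝ᵥ s ≤ E * A := by
    have hj : ∀ j, (s j) ^ 2 ≤ E * ∑ i, (ζ t i j) ^ 2 := fun j => by
      have hsj : s j = ∑ i, ε t i * ζ t i j := by
        rw [hs]; simp [Finset.sum_apply]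
      rw [hsj, hE]
      exact Finset.sum_mul_sq_le_sq_mul_sq _ _ _
    calc s ⬝ᵥ s = ∑ j, (s j) ^ 2 := by simp only [dotProduct, sq]
      _ ≤ ∑ j : Fin (n + 1), E * ∑ i, (ζ t i j) ^ 2 := Finset.sum_le_sum fun j _ => hj j
      _ = E * ∑ j : Fin (n + 1), ∑ i, (ζ t i j) ^ 2 := by rw [Finset.mul_sum]
      _ = E * A := by
          congr 1
          rw [Finset.sum_comm, hA]
          exact Finset.sum_congr rfl fun i _ => by simp only [dotProduct, sq]
  have hSxsq : Sx ^ 2 ≤ E * B := by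
    rw [hSx, hE, hB]
    exact Finset.sum_mul_sq_le_sq_mul_sq _ _ _
  have hγ1app : |ρs| * (s ⬝ᵥ Γ *ᵥ s) ≤ γ1 * (s ⬝ᵥ s) := by
    have h := hγ1max s
    simpa [Matrix.smul_mulVec, dotProduct_smul, smul_eq_mul] using h
  -- key bound on the numerator
  have hX : |ρs| * (s ⬝ᵥ Γ *ᵥ s) + γ * Sx ^ 2 ≤ γ0 * (E * m t ^ 2) := by
    have b1 : |ρs| * (s ⬝ᵥ Γ *ᵥ s) + γ * Sx ^ 2 ≤ γ0 * (s ⬝ᵥ s) + γ0 * Sx ^ 2 := by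
      nlinarith [mul_nonneg (sub_nonneg.2 hγ1le) hss0,
        mul_nonneg (sub_nonneg.2 hγle) (sq_nonneg Sx)]
    have b2 : γ0 * (s ⬝ᵥ s) + γ0 * Sx ^ 2 ≤ γ0 * (E * A) + γ0 * (E * B) := by
      nlinarith [mul_le_mul_of_nonneg_left hss hγ0nn,
        mul_le_mul_of_nonneg_left hSxsq hγ0nn]
    have b3 : γ0 * (E * A) + γ0 * (E * B) ≤ γ0 * (E * m t ^ 2) := by
      nlinarith [mul_nonneg hγ0nn hE0, hMeq]
    linarith
  -- the exact change of V
  have hΔ : V (t + 1) - V t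
      = -(2 * E) / m t ^ 2
        + (|ρs| * (s ⬝ᵥ Γ *ᵥ s) + γ * Sx ^ 2) / (m t ^ 2) ^ 2 := by
    have hγ0' : γ ≠ 0 := ne_of_gt hγpos
    have hγinv : γ * γ⁻¹ = 1 := mul_inv_cancel₀ hγ0'
    rw [hV (t + 1), hV t, hP, hρ t, ← hSx]
    linear_combination (-2 * ((θ t - θs) ⬝ᵥ s) / m t ^ 2) * habs
      + (-2 / m t ^ 2) * hras
      + (|ρs| * (s ⬝ᵥ Γ *ᵥ s) / (m t ^ 2) ^ 2) * hsg2
      + (-2 * (ρ t - ρs) * Sx / m t ^ 2 + γ * Sx ^ 2 / (m t ^ 2) ^ 2) * hγinv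
  constructor
  · rw [hΔ]
    have e1 : -(2 - γ0) * E / m t ^ 2 = (-(2 - γ0) * E * m t ^ 2) / (m t ^ 2) ^ 2 := by
      field_simp
    have e2 : -(2 * E) / m t ^ 2 + (|ρs| * (s ⬝ᵥ Γ *ᵥ s) + γ * Sx ^ 2) / (m t ^ 2) ^ 2
        = (-(2 * E) * m t ^ 2 + (|ρs| * (s ⬝ᵥ Γ *ᵥ s) + γ * Sx ^ 2)) / (m t ^ 2) ^ 2 := by
      field_simp
    rw [e1, e2]
    refine div_le_div_of_nonneg_right ?hnum (by positivity) |>.trans_eq rfl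
    case hnum => nlinarith [hX]
  · have hnum : -(2 - γ0) * E ≤ 0 := by nlinarith
    exact div_nonpos_of_nonpos_of_nonneg hnum hMpos.le
end

section
/- For the indirect adaptive law θ(t+1) = θ(t) − Γ ∑ᵢ εᵢ(t) ζᵢ(t)/m²(t), where εᵢ(t) = (θ(t) − θ*)ᵀ ζᵢ(t), m(t)² = 1 + ∑ᵢ ζᵢ(t)ᵀζᵢ(t), Γ = Γᵀ ≻ 0 with largest eigenvalue γ₁ ∈ (0,2), the function V(θ̃) = θ̃ᵀ Γ⁻¹ θ̃ with θ̃(t) = θ(t) − θ* satisfies V(θ̃(t+1)) − V(θ̃(t)) ≤ −(2 − γ₁) ∑ᵢ εᵢ(t)²/m²(t) ≤ 0. -/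
open scoped Matrix

theorem indirect_adaptive_law_V_decrease
    (n : ℕ)
    (θ : ℕ → Fin (n + 1) → ℝ) (θs : Fin (n + 1) → ℝ)
    (Γ : Matrix (Fin (n + 1)) (Fin (n + 1)) ℝ)
    (hΓsym : Γ.IsSymm) (hΓpd : Γ.PosDef)
    (γ1 : ℝ) (hγ1 : γ1 ∈ Set.Ioo (0 : ℝ) 2)
    (hγ1max : ∀ v : Fin (n + 1) → ℝ, v ⬝ᵥ Γ.mulVec v ≤ γ1 * (v ⬝ᵥ v))
    (ζ : ℕ → Fin n → Fin (n + 1) → ℝ) (ε : ℕ → Fin n → ℝ) (m : ℕ → ℝ)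
    (hm : ∀ t, m t = Real.sqrt (1 + ∑ i, ζ t i ⬝ᵥ ζ t i))
    (hε : ∀ t i, ε t i = (θ t - θs) ⬝ᵥ ζ t i)
    (hθ : ∀ t, θ (t + 1) = θ t - (m t ^ 2)⁻¹ • Γ.mulVec (∑ i, ε t i • ζ t i))
    (V : ℕ → ℝ)
    (hV : ∀ t, V t = (θ t - θs) ⬝ᵥ Γ⁻¹.mulVec (θ t - θs)) :
    ∀ t, V (t + 1) - V t ≤ -(2 - γ1) * (∑ i, (ε t i) ^ 2) / m t ^ 2 ∧
      -(2 - γ1) * (∑ i, (ε t i) ^ 2) / m t ^ 2 ≤ 0 := by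
  intro t
  obtain ⟨hγpos, hγlt⟩ := hγ1
  -- basic objects
  set x : Fin (n + 1) → ℝ := θ t - θs with hx
  set w : Fin (n + 1) → ℝ := ∑ i, ε t i • ζ t i with hw
  set E : ℝ := ∑ i, (ε t i) ^ 2 with hE
  have hEnonneg : 0 ≤ E := Finset.sum_nonneg fun i _ => sq_nonneg _
  -- m t ^ 2
  have hζself : ∀ i, 0 ≤ ζ t i ⬝ᵥ ζ t i := fun i =>
    Finset.sum_nonneg fun k _ => mul_self_nonneg _
  have hS : (0:ℝ) ≤ ∑ i, ζ t i ⬝ᵥ ζ t i := Finset.sum_nonneg fun i _ => hζself i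
  have hm2 : m t ^ 2 = 1 + ∑ i, ζ t i ⬝ᵥ ζ t i := by
    rw [hm t, Real.sq_sqrt (by linarith)]
  have hm2pos : 0 < m t ^ 2 := by rw [hm2]; linarith
  set c : ℝ := (m t ^ 2)⁻¹ with hc
  have hcpos : 0 < c := inv_pos.mpr hm2pos
  -- invertibility facts
  have hdet : IsUnit Γ.det := isUnit_iff_ne_zero.mpr hΓpd.det_pos.ne'
  have hinvmul : Γ⁻¹ * Γ = 1 := Matrix.nonsing_inv_mul Γ hdet
  have hinvsym : Γ⁻¹.IsSymm := by
    unfold Matrix.IsSymm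
    rw [Matrix.transpose_nonsing_inv, hΓsym]
  -- key identity:  Γ⁻¹ (Γ w) = w
  have hAw : Γ⁻¹.mulVec (Γ.mulVec w) = w := by
    rw [Matrix.mulVec_mulVec, hinvmul, Matrix.one_mulVec]
  -- x ⬝ᵥ w = E
  have hxw : x ⬝ᵥ w = E := by
    rw [hw, hE]
    unfold dotProduct
    simp only [Finset.sum_apply, Pi.smul_apply, smul_eq_mul, Finset.mul_sum]
    rw [Finset.sum_comm]
    refine Finset.sum_congr rfl fun i _ => ?_
    have h1 : ∑ k, x k * (ε t i * ζ t i k) = ε t i * (x ⬝ᵥ ζ t i) := by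
      rw [dotProduct, Finset.mul_sum]
      exact Finset.sum_congr rfl fun k _ => by ring
    rw [h1, ← hε t i, ← pow_two]
  -- cross term symmetric
  have hcross : (Γ.mulVec w) ⬝ᵥ (Γ⁻¹.mulVec x) = E := by
    rw [Matrix.dotProduct_mulVec, ← Matrix.mulVec_transpose, hinvsym, hAw,
      dotProduct_comm, hxw]
  -- the difference of V
  have hθ1 : θ (t + 1) - θs = x - c • Γ.mulVec w := by
    rw [hθ t, hx, hc, hw]; abel
  have hVdiff : V (t + 1) - V t = -2 * c * E + c ^ 2 * (w ⬝ᵥ Γ.mulVec w) := by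
    rw [hV (t + 1), hV t, hθ1, ← hx]
    rw [Matrix.mulVec_sub, Matrix.mulVec_smul, hAw, sub_dotProduct,
      dotProduct_sub, dotProduct_sub, smul_dotProduct,
      dotProduct_smul, dotProduct_smul, hcross, hxw]
    have h1 : (Γ.mulVec w) ⬝ᵥ w = w ⬝ᵥ Γ.mulVec w := dotProduct_comm _ _
    simp only [smul_dotProduct, smul_eq_mul]
    rw [h1]
    ring
  -- bound w ⬝ᵥ w
  have hww : w ⬝ᵥ w ≤ E * ∑ i, ζ t i ⬝ᵥ ζ t i := by
    have hwk : ∀ k, w k = ∑ i, ε t i * ζ t i k := by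
      intro k; rw [hw]; simp [Finset.sum_apply]
    have hbound : ∀ k : Fin (n + 1), w k * w k ≤ E * ∑ i, ζ t i k ^ 2 := by
      intro k
      have := Finset.sum_mul_sq_le_sq_mul_sq Finset.univ (fun i => ε t i) (fun i => ζ t i k)
      calc w k * w k = (∑ i, ε t i * ζ t i k) ^ 2 := by rw [hwk k, sq]
        _ ≤ (∑ i, (ε t i) ^ 2) * ∑ i, ζ t i k ^ 2 := this
        _ = E * ∑ i, ζ t i k ^ 2 := by rw [hE]
    calc w ⬝ᵥ w = ∑ k, w k * w k := rfl
      _ ≤ ∑ k, E * ∑ i, ζ t i k ^ 2 := Finset.sum_le_sum fun k _ => hbound k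
      _ = E * ∑ k, ∑ i, ζ t i k ^ 2 := by rw [Finset.mul_sum]
      _ = E * ∑ i, ζ t i ⬝ᵥ ζ t i := by
          rw [Finset.sum_comm]
          congr 1
          refine Finset.sum_congr rfl fun i _ => ?_
          unfold dotProduct
          exact Finset.sum_congr rfl fun k _ => pow_two _
  -- combine
  have hwΓw : w ⬝ᵥ Γ.mulVec w ≤ γ1 * (E * ∑ i, ζ t i ⬝ᵥ ζ t i) :=
    le_trans (hγ1max w) (by nlinarith [hγpos, hww])
  have hstep : V (t + 1) - V t ≤ -2 * c * E + c * γ1 * E := by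
    rw [hVdiff]
    have h1 : c ^ 2 * (w ⬝ᵥ Γ.mulVec w) ≤ c ^ 2 * (γ1 * (E * ∑ i, ζ t i ⬝ᵥ ζ t i)) :=
      mul_le_mul_of_nonneg_left hwΓw (sq_nonneg c)
    have h2 : c * (∑ i, ζ t i ⬝ᵥ ζ t i) ≤ 1 := by
      rw [hc]
      rw [inv_mul_le_iff₀ hm2pos, mul_one, hm2]
      linarith
    have h3 : c ^ 2 * (γ1 * (E * ∑ i, ζ t i ⬝ᵥ ζ t i)) ≤ c * γ1 * E := by
      have : c ^ 2 * (γ1 * (E * ∑ i, ζ t i ⬝ᵥ ζ t i))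
          = (c * γ1 * E) * (c * ∑ i, ζ t i ⬝ᵥ ζ t i) := by ring
      rw [this]
      nlinarith [mul_nonneg (mul_nonneg hcpos.le hγpos.le) hEnonneg]
    linarith
  constructor
  · have : -2 * c * E + c * γ1 * E = -(2 - γ1) * E / m t ^ 2 := by
      rw [hc]; field_simp; ring
    linarith [hstep, this ▸ hstep]
  · apply div_nonpos_of_nonpos_of_nonneg _ hm2pos.le
    nlinarith
end

section
/- Consider the MIMO direct adaptive laws θᵢ(t+1) = θᵢ(t) − sign(ρᵢ*) Γᵢ ∑_{k=1}^n ε_k(t) ζ_{ki}(t)/m²(t) and ρᵢ(t+1) = ρᵢ(t) − γᵢ ∑_{k=1}^n ε_k(t) ξ_{ki}(t)/m²(t) for i = 1,…,M, where ε_k(t) = ∑_{j=1}^M ( ρⱼ* (θⱼ(t) − θⱼ*)ᵀ ζ_{kj}(t) + (ρⱼ(t) − ρⱼ*) ξ_{kj}(t) ), and m(t)² = 1 + ∑_{k=1}^n ∑_{j=1}^M (ζ_{kj}ᵀζ_{kj} + ξ_{kj}²). If the largest eigenvalue of each |ρᵢ*| Γᵢ and each γᵢ lie in (0,2), then V(t)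 = ∑ᵢ ( |ρᵢ*| (θᵢ − θᵢ*)ᵀ Γᵢ⁻¹ (θᵢ − θᵢ*) + γᵢ⁻¹ (ρᵢ − ρᵢ*)² ) satisfies V(t+1) − V(t) ≤ −(2 − γ₀) ∑_{k=1}^n ε_k(t)²/m²(t) ≤ 0 for some γ₀ ∈ (0,2). -/
open scoped Matrix

private lemma symm_dot_swap' {N : ℕ} {A : Matrix (Fin N) (Fin N) ℝ} (hA : A.IsSymm)
    (a b : Fin N → ℝ) : a ⬝ᵥ A *ᵥ b = b ⬝ᵥ A *ᵥ a := by
  rw [Matrix.dotProduct_mulVec, ← Matrix.vecMul_transpose, hA.eq, dotProduct_comm]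

private lemma quad_expand' {N : ℕ} {A : Matrix (Fin N) (Fin N) ℝ} (hA : A.IsSymm)
    (hdet : IsUnit A.det) (a v : Fin N → ℝ) (c : ℝ) :
    (a - c • A *ᵥ v) ⬝ᵥ A⁻¹ *ᵥ (a - c • A *ᵥ v)
      = a ⬝ᵥ A⁻¹ *ᵥ a - 2*c*(a ⬝ᵥ v) + c^2 * (v ⬝ᵥ A *ᵥ v) := by
  have hAinv : A⁻¹.IsSymm := by
    rw [Matrix.IsSymm, Matrix.transpose_nonsing_inv, hA.eq]
  have h1 : A⁻¹ *ᵥ (A *ᵥ v) = v := by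
    rw [Matrix.mulVec_mulVec, Matrix.nonsing_inv_mul A hdet, Matrix.one_mulVec]
  have h2 : (A *ᵥ v) ⬝ᵥ A⁻¹ *ᵥ a = a ⬝ᵥ v := by
    rw [symm_dot_swap' hAinv, h1]
  simp only [Matrix.mulVec_sub, Matrix.mulVec_smul, sub_dotProduct,
    dotProduct_sub, smul_dotProduct, dotProduct_smul,
    smul_eq_mul, h1, h2]
  rw [dotProduct_comm (A *ᵥ v) v]
  ring

private lemma alg1' (ab sg p m2 Q D G : ℝ) (h1 : ab * sg = p) (h2 : sg^2 = 1)
    (hm : m2 ≠ 0) :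
    ab * (Q - 2*(sg/m2)*D + (sg/m2)^2 * G) - ab * Q
      = -(2/m2) * (p * D) + (1/m2^2) * (ab * G) := by
  have h : ab * (Q - 2*(sg/m2)*D + (sg/m2)^2 * G) - ab * Q
      = -(2/m2) * ((ab * sg) * D) + (1/m2^2) * (ab * (sg^2 * G)) := by
    field_simp
    ring
  rw [h, h1, h2, one_mul]

private lemma alg2' (g R S m2 : ℝ) (hg : g ≠ 0) (hm : m2 ≠ 0) :
    g⁻¹ * ((R - g * S / m2)^2 - R^2) = -(2/m2) * (R*S) + (1/m2^2) * (g * S^2) := by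
  field_simp
  ring

theorem mimo_direct_adaptive_V_decrease
    (n M : ℕ)
    (ρs : Fin M → ℝ) (hρs : ∀ i, ρs i ≠ 0)
    (θ : Fin M → ℕ → Fin (n + M) → ℝ) (θs : Fin M → Fin (n + M) → ℝ)
    (ρ : Fin M → ℕ → ℝ)
    (Γ : Fin M → Matrix (Fin (n + M)) (Fin (n + M)) ℝ)
    (hΓsym : ∀ i, (Γ i).IsSymm) (hΓpd : ∀ i, (Γ i).PosDef)
    (γ γmax : Fin M → ℝ)
    (hγ : ∀ i, γ i ∈ Set.Ioo (0 : ℝ) 2)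
    (hγmax : ∀ i, γmax i ∈ Set.Ioo (0 : ℝ) 2)
    (hγmaxI : ∀ i, ∀ v : Fin (n + M) → ℝ,
      v ⬝ᵥ (|ρs i| • Γ i).mulVec v ≤ γmax i * (v ⬝ᵥ v))
    (ζ : ℕ → Fin n → Fin M → Fin (n + M) → ℝ)
    (ξ : ℕ → Fin n → Fin M → ℝ) (ε : ℕ → Fin n → ℝ) (m : ℕ → ℝ)
    (hm : ∀ t, m t = Real.sqrt
      (1 + ∑ k, ∑ j, (ζ t k j ⬝ᵥ ζ t k j + (ξ t k j) ^ 2)))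
    (hε : ∀ t k, ε t k = ∑ j,
      (ρs j * ((θ j t - θs j) ⬝ᵥ ζ t k j) + (ρ j t - ρs j) * ξ t k j))
    (hθ : ∀ i t, θ i (t + 1) =
      θ i t - (Real.sign (ρs i) / m t ^ 2) • (Γ i).mulVec (∑ k, ε t k • ζ t k i))
    (hρ : ∀ i t, ρ i (t + 1) = ρ i t - γ i * (∑ k, ε t k * ξ t k i) / m t ^ 2)
    (V : ℕ → ℝ)
    (hV : ∀ t, V t = ∑ i,
      (|ρs i| * ((θ i t - θs i) ⬝ᵥ (Γ i)⁻¹.mulVec (θ i t - θs i)) +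
        (γ i)⁻¹ * (ρ i t - ρs i) ^ 2)) :
    ∃ γ0 ∈ Set.Ioo (0 : ℝ) 2, ∀ t,
      V (t + 1) - V t ≤ -(2 - γ0) * (∑ k, (ε t k) ^ 2) / m t ^ 2 ∧
        -(2 - γ0) * (∑ k, (ε t k) ^ 2) / m t ^ 2 ≤ 0 := by
  -- basic facts about m
  have hdotnn : ∀ (N : ℕ) (v : Fin N → ℝ), 0 ≤ v ⬝ᵥ v := fun N v =>
    Finset.sum_nonneg fun j _ => mul_self_nonneg _
  have hSnn : ∀ t, 0 ≤ ∑ k, ∑ j, (ζ t k j ⬝ᵥ ζ t k j + (ξ t k j) ^ 2) := by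
    intro t
    refine Finset.sum_nonneg fun k _ => Finset.sum_nonneg fun j _ => ?_
    exact add_nonneg (hdotnn _ _) (sq_nonneg _)
  have hm2 : ∀ t, m t ^ 2 = 1 + ∑ k, ∑ j, (ζ t k j ⬝ᵥ ζ t k j + (ξ t k j) ^ 2) := by
    intro t
    rw [hm t, Real.sq_sqrt]
    linarith [hSnn t]
  have hm2pos : ∀ t, 0 < m t ^ 2 := fun t => by
    rw [hm2 t]; linarith [hSnn t]
  have hm2ne : ∀ t, (m t ^ 2 : ℝ) ≠ 0 := fun t => (hm2pos t).ne'
  -- case M = 0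
  rcases Nat.eq_zero_or_pos M with hM | hM
  · subst hM
    refine ⟨1, by norm_num, fun t => ?_⟩
    have hε0 : ∀ k, ε t k = 0 := fun k => by rw [hε]; simp
    have hV0 : ∀ u, V u = 0 := fun u => by rw [hV]; simp
    simp [hε0, hV0]
  -- case M > 0
  have hne : (Finset.univ : Finset (Fin M)).Nonempty := ⟨⟨0, hM⟩, Finset.mem_univ _⟩
  set γ0 : ℝ := Finset.univ.sup' hne (fun i => max (γmax i) (γ i)) with hγ0
  have hγmax0 : ∀ i, γmax i ≤ γ0 := fun i =>
    le_trans (le_max_left _ _) (Finset.le_sup' (fun i => max (γmax i) (γ i)) (Finset.mem_univ i))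
  have hγle0 : ∀ i, γ i ≤ γ0 := fun i =>
    le_trans (le_max_right _ _) (Finset.le_sup' (fun i => max (γmax i) (γ i)) (Finset.mem_univ i))
  have hγ0pos : 0 < γ0 := lt_of_lt_of_le (hγmax ⟨0, hM⟩).1 (hγmax0 ⟨0, hM⟩)
  have hγ0lt2 : γ0 < 2 := by
    rw [hγ0, Finset.sup'_lt_iff]
    exact fun i _ => max_lt (hγmax i).2 (hγ i).2
  refine ⟨γ0, ⟨hγ0pos, hγ0lt2⟩, fun t => ?_⟩
  set m2 := m t ^ 2 with hm2def
  have hm2pos' : 0 < m2 := hm2pos t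
  have hm2ne' : m2 ≠ 0 := hm2ne t
  set E := ∑ k, (ε t k) ^ 2 with hE
  have hEnn : 0 ≤ E := Finset.sum_nonneg fun k _ => sq_nonneg _
  -- notation for the increments
  set v : Fin M → Fin (n + M) → ℝ := fun i => ∑ k, ε t k • ζ t k i with hv
  set s : Fin M → ℝ := fun i => ∑ k, ε t k * ξ t k i with hs
  -- key per-index identity
  have key : ∀ i : Fin M,
      (|ρs i| * ((θ i (t+1) - θs i) ⬝ᵥ (Γ i)⁻¹.mulVec (θ i (t+1) - θs i)) +
        (γ i)⁻¹ * (ρ i (t+1) - ρs i) ^ 2) -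
      (|ρs i| * ((θ i t - θs i) ⬝ᵥ (Γ i)⁻¹.mulVec (θ i t - θs i)) +
        (γ i)⁻¹ * (ρ i t - ρs i) ^ 2)
      = -(2/m2) * (ρs i * ((θ i t - θs i) ⬝ᵥ v i) + (ρ i t - ρs i) * s i)
        + (1/m2^2) * ((v i) ⬝ᵥ (|ρs i| • Γ i).mulVec (v i) + γ i * (s i)^2) := by
    intro i
    have habs : |ρs i| * Real.sign (ρs i) = ρs i := by
      rcases (hρs i).lt_or_gt with h | h
      · rw [Real.sign_of_neg h, abs_of_neg h]; ring
      · rw [Real.sign_of_pos h, abs_of_pos h]; ring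
    have hsq : Real.sign (ρs i) ^ 2 = 1 := by
      rcases (hρs i).lt_or_gt with h | h
      · rw [Real.sign_of_neg h]; norm_num
      · rw [Real.sign_of_pos h]; norm_num
    have hθi : θ i (t+1) - θs i
        = (θ i t - θs i) - (Real.sign (ρs i) / m2) • (Γ i).mulVec (v i) := by
      rw [hθ i t]
      rw [sub_right_comm]
    have hρi : ρ i (t+1) - ρs i = (ρ i t - ρs i) - γ i * s i / m2 := by
      rw [hρ i t, sub_right_comm]
    have hdet : IsUnit (Γ i).det := isUnit_iff_ne_zero.mpr (ne_of_gt (hΓpd i).det_pos)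
    rw [hθi, hρi, quad_expand' (hΓsym i) hdet]
    have hsmul : (v i) ⬝ᵥ (|ρs i| • Γ i).mulVec (v i)
        = |ρs i| * ((v i) ⬝ᵥ (Γ i).mulVec (v i)) := by
      rw [Matrix.smul_mulVec, dotProduct_smul, smul_eq_mul]
    rw [hsmul]
    have e1 := alg1' (|ρs i|) (Real.sign (ρs i)) (ρs i) m2
      ((θ i t - θs i) ⬝ᵥ (Γ i)⁻¹.mulVec (θ i t - θs i))
      ((θ i t - θs i) ⬝ᵥ v i) ((v i) ⬝ᵥ (Γ i).mulVec (v i)) habs hsq hm2ne'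
    have e2 := alg2' (γ i) (ρ i t - ρs i) (s i) m2 (ne_of_gt (hγ i).1) hm2ne'
    have e2' : (γ i)⁻¹ * ((ρ i t - ρs i) - γ i * s i / m2)^2
        - (γ i)⁻¹ * (ρ i t - ρs i)^2
        = -(2/m2) * ((ρ i t - ρs i) * s i) + (1/m2^2) * (γ i * (s i)^2) := by
      rw [← e2]; ring
    calc |ρs i| * ((θ i t - θs i) ⬝ᵥ (Γ i)⁻¹.mulVec (θ i t - θs i)
            - 2*(Real.sign (ρs i)/m2)*((θ i t - θs i) ⬝ᵥ v i)
            + (Real.sign (ρs i)/m2)^2 * ((v i) ⬝ᵥ (Γ i).mulVec (v i)))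
          + (γ i)⁻¹ * ((ρ i t - ρs i) - γ i * s i / m2)^2
          - (|ρs i| * ((θ i t - θs i) ⬝ᵥ (Γ i)⁻¹.mulVec (θ i t - θs i))
            + (γ i)⁻¹ * (ρ i t - ρs i)^2)
        = (|ρs i| * ((θ i t - θs i) ⬝ᵥ (Γ i)⁻¹.mulVec (θ i t - θs i)
            - 2*(Real.sign (ρs i)/m2)*((θ i t - θs i) ⬝ᵥ v i)
            + (Real.sign (ρs i)/m2)^2 * ((v i) ⬝ᵥ (Γ i).mulVec (v i)))
          - |ρs i| * ((θ i t - θs i) ⬝ᵥ (Γ i)⁻¹.mulVec (θ i t - θs i)))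
          + ((γ i)⁻¹ * ((ρ i t - ρs i) - γ i * s i / m2)^2
            - (γ i)⁻¹ * (ρ i t - ρs i)^2) := by ring
      _ = (-(2/m2) * (ρs i * ((θ i t - θs i) ⬝ᵥ v i))
            + (1/m2^2) * (|ρs i| * ((v i) ⬝ᵥ (Γ i).mulVec (v i))))
          + (-(2/m2) * ((ρ i t - ρs i) * s i) + (1/m2^2) * (γ i * (s i)^2)) := by
        rw [e1, e2']
      _ = -(2/m2) * (ρs i * ((θ i t - θs i) ⬝ᵥ v i) + (ρ i t - ρs i) * s i)
          + (1/m2^2) * (|ρs i| * ((v i) ⬝ᵥ (Γ i).mulVec (v i)) + γ i * (s i)^2) := by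
        ring
  -- the cross-term sum equals E
  have cross : ∑ i, (ρs i * ((θ i t - θs i) ⬝ᵥ v i) + (ρ i t - ρs i) * s i) = E := by
    have hdv : ∀ i, (θ i t - θs i) ⬝ᵥ v i
        = ∑ k, ε t k * ((θ i t - θs i) ⬝ᵥ ζ t k i) := by
      intro i
      simp only [hv, dotProduct, Finset.sum_apply, Pi.smul_apply, smul_eq_mul,
        Finset.mul_sum]
      rw [Finset.sum_comm]
      congr 1; ext k; congr 1; ext j; ring
    calc ∑ i, (ρs i * ((θ i t - θs i) ⬝ᵥ v i) + (ρ i t - ρs i) * s i)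
        = ∑ i, ∑ k, ε t k *
            (ρs i * ((θ i t - θs i) ⬝ᵥ ζ t k i) + (ρ i t - ρs i) * ξ t k i) := by
          refine Finset.sum_congr rfl fun i _ => ?_
          rw [hdv i]
          simp only [hs, Finset.mul_sum]
          rw [← Finset.sum_add_distrib]
          refine Finset.sum_congr rfl fun k _ => ?_
          ring
      _ = ∑ k, ε t k * ∑ i,
            (ρs i * ((θ i t - θs i) ⬝ᵥ ζ t k i) + (ρ i t - ρs i) * ξ t k i) := by
          rw [Finset.sum_comm]
          exact Finset.sum_congr rfl fun k _ => (Finset.mul_sum _ _ _).symm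
      _ = ∑ k, (ε t k) ^ 2 := by
          refine Finset.sum_congr rfl fun k _ => ?_
          rw [← hε t k]; ring
  -- Cauchy–Schwarz bounds
  have CSv : ∀ i, (v i) ⬝ᵥ (v i) ≤ E * ∑ k, ζ t k i ⬝ᵥ ζ t k i := by
    intro i
    have h1 : (v i) ⬝ᵥ (v i) = ∑ j, (∑ k, ε t k * ζ t k i j) ^ 2 := by
      simp only [hv, dotProduct, Finset.sum_apply, Pi.smul_apply, smul_eq_mul]
      exact Finset.sum_congr rfl fun j _ => (sq _).symm
    rw [h1]
    calc ∑ j, (∑ k, ε t k * ζ t k i j) ^ 2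
        ≤ ∑ j, (∑ k, (ε t k)^2) * ∑ k, (ζ t k i j)^2 := by
          refine Finset.sum_le_sum fun j _ => ?_
          exact Finset.sum_mul_sq_le_sq_mul_sq Finset.univ _ _
      _ = E * ∑ k, ζ t k i ⬝ᵥ ζ t k i := by
          rw [← Finset.mul_sum, Finset.sum_comm]
          congr 1
          refine Finset.sum_congr rfl fun k _ => ?_
          simp only [dotProduct]
          exact Finset.sum_congr rfl fun j _ => sq _
  have CSs : ∀ i, (s i)^2 ≤ E * ∑ k, (ξ t k i)^2 := fun i =>
    Finset.sum_mul_sq_le_sq_mul_sq Finset.univ _ _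
  -- bound on the quadratic remainder
  have quadbound : ∑ i, ((v i) ⬝ᵥ (|ρs i| • Γ i).mulVec (v i) + γ i * (s i)^2)
      ≤ γ0 * E * m2 := by
    have step1 : ∑ i, ((v i) ⬝ᵥ (|ρs i| • Γ i).mulVec (v i) + γ i * (s i)^2)
        ≤ γ0 * ∑ i, ((v i) ⬝ᵥ (v i) + (s i)^2) := by
      rw [Finset.mul_sum]
      refine Finset.sum_le_sum fun i _ => ?_
      have h1 : (v i) ⬝ᵥ (|ρs i| • Γ i).mulVec (v i) ≤ γ0 * ((v i) ⬝ᵥ (v i)) :=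
        le_trans (hγmaxI i (v i))
          (mul_le_mul_of_nonneg_right (hγmax0 i) (hdotnn _ _))
      have h2 : γ i * (s i)^2 ≤ γ0 * (s i)^2 :=
        mul_le_mul_of_nonneg_right (hγle0 i) (sq_nonneg _)
      calc (v i) ⬝ᵥ (|ρs i| • Γ i).mulVec (v i) + γ i * (s i)^2
          ≤ γ0 * ((v i) ⬝ᵥ (v i)) + γ0 * (s i)^2 := add_le_add h1 h2
        _ = γ0 * ((v i) ⬝ᵥ (v i) + (s i)^2) := by ring
    have step2 : ∑ i, ((v i) ⬝ᵥ (v i) + (s i)^2)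
        ≤ E * ∑ i, ∑ k, (ζ t k i ⬝ᵥ ζ t k i + (ξ t k i)^2) := by
      rw [Finset.mul_sum]
      refine Finset.sum_le_sum fun i _ => ?_
      calc (v i) ⬝ᵥ (v i) + (s i)^2
          ≤ E * ∑ k, ζ t k i ⬝ᵥ ζ t k i + E * ∑ k, (ξ t k i)^2 :=
            add_le_add (CSv i) (CSs i)
        _ = E * ∑ k, (ζ t k i ⬝ᵥ ζ t k i + (ξ t k i)^2) := by
            simp only [Finset.mul_sum, mul_add, Finset.sum_add_distrib]
    have step3 : E * ∑ i, ∑ k, (ζ t k i ⬝ᵥ ζ t k i + (ξ t k i)^2) ≤ E * m2 := by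
      refine mul_le_mul_of_nonneg_left ?_ hEnn
      rw [hm2def, hm2 t, Finset.sum_comm]
      linarith
    calc ∑ i, ((v i) ⬝ᵥ (|ρs i| • Γ i).mulVec (v i) + γ i * (s i)^2)
        ≤ γ0 * ∑ i, ((v i) ⬝ᵥ (v i) + (s i)^2) := step1
      _ ≤ γ0 * (E * m2) :=
          mul_le_mul_of_nonneg_left (le_trans step2 step3) (le_of_lt hγ0pos)
      _ = γ0 * E * m2 := by ring
  -- put it together
  have hΔV : V (t+1) - V t = -(2/m2) * E
      + (1/m2^2) * ∑ i, ((v i) ⬝ᵥ (|ρs i| • Γ i).mulVec (v i) + γ i * (s i)^2) := by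
    rw [hV (t+1), hV t, ← Finset.sum_sub_distrib]
    rw [Finset.sum_congr rfl fun i _ => key i]
    rw [Finset.sum_add_distrib, ← Finset.mul_sum, ← Finset.mul_sum, cross]
  constructor
  · rw [hΔV]
    have h1 : (1/m2^2) * ∑ i, ((v i) ⬝ᵥ (|ρs i| • Γ i).mulVec (v i) + γ i * (s i)^2)
        ≤ (1/m2^2) * (γ0 * E * m2) := by
      refine mul_le_mul_of_nonneg_left quadbound ?_
      positivity
    have h2 : (1/m2^2) * (γ0 * E * m2) = γ0 * E / m2 := by
      field_simp
    have h3 : -(2/m2) * E + γ0 * E / m2 = -(2 - γ0) * E / m2 := by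
      field_simp
      ring
    rw [← h3]
    linarith [h1, h2.le, h2.ge]
  · have : 0 ≤ (2 - γ0) * E / m2 := by
      apply div_nonneg _ (le_of_lt hm2pos')
      exact mul_nonneg (by linarith) hEnn
    have heq : -(2 - γ0) * E / m2 = -((2 - γ0) * E / m2) := by ring
    rw [heq]
    linarith
end
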